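/- arXiv:1810.05433 — 2 statements merged into one kernel-verified Lean document; each statement's English description precedes it below -/
import Mathlib

section
/- Let T = J^{2m} ⊆ ℤ₄^{2m} with J = {0,1}. For z ∈ ℤ₄^{2m} with no coordinate equal to 2, wt₁(z)=u and wt₃(z)=v, we have |χ_z(T) + conj(χ_z(T))|² = 2^{4m+2−u−v} cos²((u−v)π/4). In particular this equals 2^{4m+2−u−v} if u ≡ v mod 4, equals 2^{4m+1−u−v} if u−v ≡ ±1 mod 4, and equals 0 if u−v ≡ 2 mod 4. -/
/-- The character `χ_z` of `ℤ₄^n`, `χ_z(b) = i^{∑_j z_j b_j}`. -/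
noncomputable def chiVec {n : ℕ} (z b : Fin n → ZMod 4) : ℂ :=
  Complex.I ^ (∑ j, z j * b j).val

/-- `wt_j(x)`: the number of coordinates of `x` equal to `j`. -/
def wt {n : ℕ} (j : ZMod 4) (x : Fin n → ZMod 4) : ℕ :=
  (Finset.univ.filter fun i => x i = j).card

/-- `T = J^n ⊆ ℤ₄^n` with `J = {0,1}`. -/
def Jpow (n : ℕ) : Finset (Fin n → ZMod 4) :=
  Finset.univ.filter fun b => ∀ j, b j = 0 ∨ b j = 1

lemma I_pow_mod (n : ℕ) : Complex.I ^ n = Complex.I ^ (n % 4) := by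
  conv_lhs => rw [← Nat.div_add_mod n 4]
  rw [pow_add, pow_mul, Complex.I_pow_four, one_pow, one_mul]

lemma I_pow_val_add (a b : ZMod 4) :
    Complex.I ^ (a + b).val = Complex.I ^ a.val * Complex.I ^ b.val := by
  rw [← pow_add, I_pow_mod (a.val + b.val), ZMod.val_add]

lemma I_pow_val_sum {n : ℕ} (s : Finset (Fin n)) (g : Fin n → ZMod 4) :
    Complex.I ^ ((∑ j ∈ s, g j).val) = ∏ j ∈ s, Complex.I ^ (g j).val := by
  induction s using Finset.cons_induction with
  | empty => simp
  | cons a s ha ih => rw [Finset.sum_cons, Finset.prod_cons, I_pow_val_add, ih]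

lemma sumJ (n : ℕ) (z : Fin n → ZMod 4) :
    ∑ t ∈ Jpow n, chiVec z t = ∏ j, (1 + Complex.I ^ (z j).val) := by
  have hJ : Jpow n = Fintype.piFinset (fun _ => ({0,1} : Finset (ZMod 4))) := by
    ext x
    simp [Jpow, Fintype.mem_piFinset]
  have h1 : ∀ j, (1 + Complex.I ^ (z j).val)
      = ∑ b ∈ ({0,1} : Finset (ZMod 4)), Complex.I ^ ((z j * b).val) := by
    intro j
    rw [Finset.sum_insert (by decide), Finset.sum_singleton]
    simp
  rw [hJ, Finset.prod_congr rfl (fun j _ => h1 j), Finset.prod_univ_sum]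
  exact Finset.sum_congr rfl fun x _ => I_pow_val_sum Finset.univ _

lemma count {n : ℕ} (z : Fin n → ZMod 4) (h2 : ∀ j, z j ≠ 2) :
    wt 0 z + wt 1 z + wt 3 z = n := by
  have key : ∀ a : ZMod 4, a ≠ 2 →
      ((if a = 0 then 1 else 0) + (if a = 1 then 1 else 0) + (if a = 3 then 1 else 0)) = 1 := by
    decide
  calc wt 0 z + wt 1 z + wt 3 z
      = ∑ j : Fin n, ((if z j = 0 then 1 else 0) + (if z j = 1 then 1 else 0)
          + (if z j = 3 then 1 else 0)) := by
        simp only [wt, Finset.card_filter]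
        rw [← Finset.sum_add_distrib, ← Finset.sum_add_distrib]
    _ = ∑ _j : Fin n, 1 := Finset.sum_congr rfl fun j _ => key (z j) (h2 j)
    _ = n := by simp

lemma prod_eq {n : ℕ} (z : Fin n → ZMod 4) (h2 : ∀ j, z j ≠ 2) :
    ∏ j, (1 + Complex.I ^ (z j).val)
      = 2 ^ (wt 0 z) * ((1 + Complex.I) ^ (wt 1 z) * (1 - Complex.I) ^ (wt 3 z)) := by
  rw [← Finset.prod_filter_mul_prod_filter_not Finset.univ (fun j => z j = 0)]
  rw [← Finset.prod_filter_mul_prod_filter_not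
      (Finset.univ.filter fun j => ¬ z j = 0) (fun j => z j = 1)]
  have e0 : ∏ j ∈ Finset.univ.filter (fun j => z j = 0), (1 + Complex.I ^ (z j).val)
      = 2 ^ (wt 0 z) := by
    rw [Finset.prod_congr rfl (fun j hj => ?_), Finset.prod_const]
    · rfl
    · rw [Finset.mem_filter] at hj
      rw [hj.2]
      norm_num
  have e1 : ∏ j ∈ (Finset.univ.filter fun j => ¬ z j = 0).filter (fun j => z j = 1),
        (1 + Complex.I ^ (z j).val) = (1 + Complex.I) ^ (wt 1 z) := by
    rw [Finset.filter_filter]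
    have hset : (Finset.univ.filter fun j => ¬ z j = 0 ∧ z j = 1)
        = Finset.univ.filter fun j => z j = 1 := by
      apply Finset.filter_congr
      intro j _
      constructor
      · exact fun h => h.2
      · intro h; exact ⟨by rw [h]; decide, h⟩
    rw [hset, Finset.prod_congr rfl (fun j hj => ?_), Finset.prod_const]
    · rfl
    · rw [Finset.mem_filter] at hj
      rw [hj.2, show ((1:ZMod 4)).val = 1 from rfl, pow_one]
  have e3 : ∏ j ∈ (Finset.univ.filter fun j => ¬ z j = 0).filter (fun j => ¬ z j = 1),
        (1 + Complex.I ^ (z j).val) = (1 - Complex.I) ^ (wt 3 z) := by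
    rw [Finset.filter_filter]
    have hset : (Finset.univ.filter fun j => ¬ z j = 0 ∧ ¬ z j = 1)
        = Finset.univ.filter fun j => z j = 3 := by
      apply Finset.filter_congr
      intro j _
      have hj2 := h2 j
      revert hj2
      generalize z j = a
      revert a; decide
    rw [hset, Finset.prod_congr rfl (fun j hj => ?_), Finset.prod_const]
    · rfl
    · rw [Finset.mem_filter] at hj
      rw [hj.2]
      show 1 + Complex.I ^ 3 = 1 - Complex.I
      rw [pow_succ, Complex.I_sq]
      ring
  rw [e0, e1, e3]

lemma one_add_I_eq : (1 + Complex.I)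
    = (Real.sqrt 2 : ℂ) * Complex.exp ((Real.pi/4 : ℝ) * Complex.I) := by
  have h : Real.sqrt 2 * (Real.sqrt 2 / 2) = 1 := by
    have := Real.mul_self_sqrt (by norm_num : (0:ℝ) ≤ 2); nlinarith
  rw [Complex.exp_mul_I, ← Complex.ofReal_cos, ← Complex.ofReal_sin,
    Real.cos_pi_div_four, Real.sin_pi_div_four, mul_add, ← mul_assoc,
    ← Complex.ofReal_mul, h]
  norm_num

lemma one_sub_I_eq : (1 - Complex.I)
    = (Real.sqrt 2 : ℂ) * Complex.exp ((-(Real.pi/4) : ℝ) * Complex.I) := by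
  have h := congrArg (starRingEnd ℂ) one_add_I_eq
  simp only [map_add, map_one, Complex.conj_I, map_mul, Complex.conj_ofReal,
    ← Complex.exp_conj] at h
  rw [show (1 : ℂ) - Complex.I = 1 + -Complex.I by ring, h]
  congr 2
  push_cast
  ring

lemma cos_sq_shift (x : ℝ) (q : ℤ) :
    Real.cos (x + q * Real.pi) ^ 2 = Real.cos x ^ 2 := by
  rw [Real.cos_sq, Real.cos_sq,
    show 2*(x + (q:ℝ)*Real.pi) = 2*x + q*(2*Real.pi) by ring,
    Real.cos_add_int_mul_two_pi]

lemma cos_pi_div_four_sq : Real.cos (Real.pi/4) ^ 2 = 1/2 := by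
  rw [Real.cos_pi_div_four, div_pow, Real.sq_sqrt (by norm_num : (0:ℝ) ≤ 2)]
  norm_num

/-- for `T = J^{2m}` and `z` with no coordinate equal to `2`, `wt₁(z) = u`,
`wt₃(z) = v`, we have `|χ_z(T) + conj(χ_z(T))|² = 2^{4m+2-u-v}·cos²((u-v)π/4)`; in
particular this equals `2^{4m+2-u-v}` if `u ≡ v (mod 4)`, equals `2^{4m+1-u-v}` if
`u - v ≡ ±1 (mod 4)`, and equals `0` if `u - v ≡ 2 (mod 4)`. -/
theorem stmt8 (m : ℕ) (z : Fin (2 * m) → ZMod 4) (u v : ℕ)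
    (h2 : ¬ ∃ j, z j = 2) (hu : wt 1 z = u) (hv : wt 3 z = v) :
    ‖(∑ t ∈ Jpow (2 * m), chiVec z t) +
        (starRingEnd ℂ) (∑ t ∈ Jpow (2 * m), chiVec z t)‖ ^ 2 =
      2 ^ (4 * m + 2 - u - v) * Real.cos (((u : ℝ) - v) * Real.pi / 4) ^ 2 ∧
    ((u : ℤ) ≡ (v : ℤ) [ZMOD 4] →
      ‖(∑ t ∈ Jpow (2 * m), chiVec z t) +
          (starRingEnd ℂ) (∑ t ∈ Jpow (2 * m), chiVec z t)‖ ^ 2 =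
        2 ^ (4 * m + 2 - u - v)) ∧
    (((u : ℤ) - v ≡ 1 [ZMOD 4] ∨ (u : ℤ) - v ≡ -1 [ZMOD 4]) →
      ‖(∑ t ∈ Jpow (2 * m), chiVec z t) +
          (starRingEnd ℂ) (∑ t ∈ Jpow (2 * m), chiVec z t)‖ ^ 2 =
        2 ^ (4 * m + 1 - u - v)) ∧
    ((u : ℤ) - v ≡ 2 [ZMOD 4] →
      ‖(∑ t ∈ Jpow (2 * m), chiVec z t) +
          (starRingEnd ℂ) (∑ t ∈ Jpow (2 * m), chiVec z t)‖ ^ 2 = 0) := by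
  push_neg at h2
  set S := ∑ t ∈ Jpow (2 * m), chiVec z t with hSdef
  set w0 := wt 0 z with hw0
  have hcount : w0 + u + v = 2 * m := by
    rw [hw0, ← hu, ← hv]; exact count z h2
  set θ : ℝ := ((u : ℝ) - v) * Real.pi / 4 with hθdef
  set r : ℝ := 2 ^ w0 * (Real.sqrt 2) ^ (u + v) with hrdef
  have hS : S = (r : ℂ) * Complex.exp ((θ : ℝ) * Complex.I) := by
    rw [hSdef, sumJ, prod_eq z h2, ← hw0, hu, hv, one_add_I_eq, one_sub_I_eq,
      mul_pow, mul_pow, ← Complex.exp_nat_mul, ← Complex.exp_nat_mul]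
    have hexp : Complex.exp ((u:ℂ) * ((Real.pi/4 : ℝ) * Complex.I))
        * Complex.exp ((v:ℂ) * ((-(Real.pi/4) : ℝ) * Complex.I))
        = Complex.exp ((θ : ℝ) * Complex.I) := by
      rw [← Complex.exp_add]
      congr 1
      rw [hθdef]
      push_cast
      ring
    rw [← hexp, hrdef]
    push_cast
    ring
  have hre : S.re = r * Real.cos θ := by
    rw [hS, Complex.re_ofReal_mul, Complex.exp_ofReal_mul_I_re]
  have habs : ‖S + (starRingEnd ℂ) S‖ ^ 2 = (2 * S.re) ^ 2 := by
    rw [Complex.add_conj, Complex.norm_real, Real.norm_eq_abs, sq_abs]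
  have hr4 : 4 * r ^ 2 = 2 ^ (4 * m + 2 - u - v) := by
    have hsq : Real.sqrt 2 ^ 2 = 2 := Real.sq_sqrt (by norm_num)
    have : 4 * r ^ 2 = 2 ^ (2 * w0 + (u + v) + 2) := by
      rw [hrdef]
      rw [show (2:ℝ) ^ (2 * w0 + (u + v) + 2) = ((2:ℝ)^w0)^2 * ((Real.sqrt 2)^2)^(u+v) * 2^2 by
        rw [hsq, ← pow_mul, ← pow_add, ← pow_add]; ring_nf]
      ring
    rw [this]
    congr 1
    omega
  have main : ‖S + (starRingEnd ℂ) S‖ ^ 2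
      = 2 ^ (4 * m + 2 - u - v) * Real.cos θ ^ 2 := by
    rw [habs, hre, ← hr4]
    ring
  refine ⟨main, ?_, ?_, ?_⟩
  · intro hmod
    obtain ⟨q, hq⟩ := hmod.dvd
    have hq' : (u : ℤ) - v = 4 * (-q) := by omega
    have hθ : θ = 0 + (-q : ℤ) * Real.pi := by
      rw [hθdef]
      have : ((u:ℝ) - v) = 4 * ((-q : ℤ) : ℝ) := by exact_mod_cast congrArg Int.cast hq'
      rw [this]
      push_cast
      ring
    rw [main, hθ, cos_sq_shift, Real.cos_zero]
    norm_num
  · intro hmod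
    have hcos : Real.cos θ ^ 2 = 1/2 := by
      rcases hmod with hmod | hmod
      · obtain ⟨q, hq⟩ := hmod.dvd
        have hq' : (u : ℤ) - v = 1 + 4 * (-q) := by omega
        have hθ : θ = Real.pi/4 + (-q : ℤ) * Real.pi := by
          rw [hθdef]
          have : ((u:ℝ) - v) = 1 + 4 * ((-q : ℤ) : ℝ) := by
            exact_mod_cast congrArg Int.cast hq'
          rw [this]
          push_cast
          ring
        rw [hθ, cos_sq_shift, cos_pi_div_four_sq]
      · obtain ⟨q, hq⟩ := hmod.dvd
        have hq' : (u : ℤ) - v = -1 + 4 * (-q) := by omega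
        have hθ : θ = -(Real.pi/4) + (-q : ℤ) * Real.pi := by
          rw [hθdef]
          have : ((u:ℝ) - v) = -1 + 4 * ((-q : ℤ) : ℝ) := by
            exact_mod_cast congrArg Int.cast hq'
          rw [this]
          push_cast
          ring
        rw [hθ, cos_sq_shift, Real.cos_neg, cos_pi_div_four_sq]
    rw [main, hcos,
      show 4 * m + 2 - u - v = (4 * m + 1 - u - v) + 1 by omega, pow_succ]
    ring
  · intro hmod
    obtain ⟨q, hq⟩ := hmod.dvd
    have hq' : (u : ℤ) - v = 2 + 4 * (-q) := by omega
    have hθ : θ = Real.pi/2 + (-q : ℤ) * Real.pi := by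
      rw [hθdef]
      have : ((u:ℝ) - v) = 2 + 4 * ((-q : ℤ) : ℝ) := by
        exact_mod_cast congrArg Int.cast hq'
      rw [this]
      push_cast
      ring
    rw [main, hθ, cos_sq_shift, Real.cos_pi_div_two]
    norm_num
end

section
/- For every integer m ≥ 3, the function f_m(x) = 2^{4m+1} − (9/13)^x·13^m − (2·(9/10)^x − (2/5)^x)·10^m is strictly increasing on the interval [0, m]. Consequently, for distinct integers m₁, m₁′ ∈ {0,1,…,m}, the values 2^{4m+1} − 3^{2m₁}·13^{m−m₁} − (2·3^{2m₁} − 2^{2m₁})·10^{m−m₁} are pairwise distinct. -/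
open Real

-- auxiliary: 2*10^m ≤ 13^m for m ≥ 3
lemma aux13 (m : ℕ) (hm : 3 ≤ m) : 2 * (10:ℝ)^m ≤ 13^m := by
  induction m, hm using Nat.le_induction with
  | base => norm_num
  | succ n hn ih =>
    rw [pow_succ, pow_succ]
    nlinarith [pow_pos (show (0:ℝ) < 10 by norm_num) n, pow_pos (show (0:ℝ) < 13 by norm_num) n]

lemma auxlog : Real.log (5/2) < 2 * Real.log (13/9) + 2 * Real.log (10/9) := by
  have h : Real.log ((5:ℝ)/2) < Real.log (16900/6561) :=
    Real.log_lt_log (by norm_num) (by norm_num)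
  have h2 : Real.log ((16900:ℝ)/6561) = 2 * Real.log (13/9) + 2 * Real.log (10/9) := by
    rw [show ((16900:ℝ)/6561) = (13/9)^2 * (10/9)^2 by norm_num,
      Real.log_mul (by positivity) (by positivity), Real.log_pow, Real.log_pow]
    push_cast; ring
  linarith

lemma auxderiv (m : ℕ) (x : ℝ) :
    HasDerivAt (fun x : ℝ =>
        2 ^ (4 * m + 1) - (9 / 13 : ℝ) ^ x * 13 ^ m -
          (2 * (9 / 10 : ℝ) ^ x - (2 / 5 : ℝ) ^ x) * 10 ^ m)
      (-((9/13:ℝ)^x * Real.log (9/13) * 13^m)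
        - (2 * ((9/10:ℝ)^x * Real.log (9/10)) - (2/5:ℝ)^x * Real.log (2/5)) * 10^m) x := by
  have h1 := (Real.hasStrictDerivAt_const_rpow (show (0:ℝ) < 9/13 by norm_num) x).hasDerivAt
  have h2 := (Real.hasStrictDerivAt_const_rpow (show (0:ℝ) < 9/10 by norm_num) x).hasDerivAt
  have h3 := (Real.hasStrictDerivAt_const_rpow (show (0:ℝ) < 2/5 by norm_num) x).hasDerivAt
  have := ((hasDerivAt_const x ((2:ℝ) ^ (4 * m + 1))).sub (h1.mul_const ((13:ℝ)^m))).sub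
    ((((h2.const_mul 2)).sub h3).mul_const ((10:ℝ)^m))
  exact this.congr_deriv (by ring)

lemma auxmono (m : ℕ) (hm : 3 ≤ m) :
    StrictMonoOn
      (fun x : ℝ =>
        2 ^ (4 * m + 1) - (9 / 13 : ℝ) ^ x * 13 ^ m -
          (2 * (9 / 10 : ℝ) ^ x - (2 / 5 : ℝ) ^ x) * 10 ^ m)
      (Set.Icc (0 : ℝ) (m : ℝ)) := by
  apply strictMonoOn_of_deriv_pos (convex_Icc _ _)
  · exact fun x _ => ((auxderiv m x).continuousAt).continuousWithinAt
  · intro x hx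
    rw [interior_Icc, Set.mem_Ioo] at hx
    rw [(auxderiv m x).deriv]
    have hx0 : (0:ℝ) ≤ x := le_of_lt hx.1
    -- rewrite logs
    have l1 : Real.log (9/13 : ℝ) = - Real.log (13/9) := by
      rw [← Real.log_inv]; norm_num
    have l2 : Real.log (9/10 : ℝ) = - Real.log (10/9) := by
      rw [← Real.log_inv]; norm_num
    have l3 : Real.log (2/5 : ℝ) = - Real.log (5/2) := by
      rw [← Real.log_inv]; norm_num
    rw [l1, l2, l3]
    have hA : (2/5:ℝ)^x ≤ (9/13:ℝ)^x := Real.rpow_le_rpow (by norm_num) (by norm_num) hx0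
    have hB : (2/5:ℝ)^x ≤ (9/10:ℝ)^x := Real.rpow_le_rpow (by norm_num) (by norm_num) hx0
    have hC : (0:ℝ) < (2/5:ℝ)^x := Real.rpow_pos_of_pos (by norm_num) x
    have h13 := aux13 m hm
    have h10 : (0:ℝ) < (10:ℝ)^m := by positivity
    have hl1 : (0:ℝ) < Real.log (13/9) := Real.log_pos (by norm_num)
    have hl2 : (0:ℝ) < Real.log (10/9) := Real.log_pos (by norm_num)
    have hl3 : (0:ℝ) < Real.log (5/2) := Real.log_pos (by norm_num)
    have key := auxlog
    nlinarith [mul_le_mul_of_nonneg_left h13 (mul_nonneg hC.le hl1.le),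
      mul_le_mul_of_nonneg_right hA (mul_nonneg hl1.le (by positivity : (0:ℝ) ≤ (13:ℝ)^m)),
      mul_le_mul_of_nonneg_right hB (mul_nonneg hl2.le h10.le),
      mul_pos hC h10, mul_lt_mul_of_pos_right key (mul_pos hC h10)]

lemma auxcast (m k : ℕ) (hk : k ≤ m) :
    ((2 ^ (4 * m + 1) - 3 ^ (2 * k) * 13 ^ (m - k) -
        (2 * 3 ^ (2 * k) - 2 ^ (2 * k)) * 10 ^ (m - k) : ℤ) : ℝ) =
      2 ^ (4 * m + 1) - (9 / 13 : ℝ) ^ (k:ℝ) * 13 ^ m -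
        (2 * (9 / 10 : ℝ) ^ (k:ℝ) - (2 / 5 : ℝ) ^ (k:ℝ)) * 10 ^ m := by
  obtain ⟨e, rfl⟩ : ∃ e, m = k + e := ⟨m - k, (Nat.add_sub_cancel' hk).symm⟩
  rw [Nat.add_sub_cancel_left]
  push_cast
  rw [Real.rpow_natCast, Real.rpow_natCast, Real.rpow_natCast]
  have A : ((9:ℝ)/13)^k * 13^(k+e) = 3^(2*k) * 13^e := by
    rw [div_pow, pow_add, pow_mul]
    field_simp
    ring
  have B : ((9:ℝ)/10)^k * 10^(k+e) = 3^(2*k) * 10^e := by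
    rw [div_pow, pow_add, pow_mul]
    field_simp
    ring
  have C : ((2:ℝ)/5)^k * 10^(k+e) = 2^(2*k) * 10^e := by
    rw [div_pow, pow_add, two_mul, pow_add, show (10:ℝ) = 2*5 by norm_num, mul_pow, mul_pow]
    field_simp
  nlinarith [A, B, C]

/-- for every integer `m ≥ 3`, the function
`f_m(x) = 2^{4m+1} - (9/13)^x·13^m - (2·(9/10)^x - (2/5)^x)·10^m` is strictly increasing on
`[0, m]`; consequently, for distinct integers `m₁, m₁' ∈ {0,…,m}`, the values
`2^{4m+1} - 3^{2m₁}·13^{m-m₁} - (2·3^{2m₁} - 2^{2m₁})·10^{m-m₁}` are pairwise distinct. -/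
theorem stmt19 (m : ℕ) (hm : 3 ≤ m) :
    StrictMonoOn
      (fun x : ℝ =>
        2 ^ (4 * m + 1) - (9 / 13 : ℝ) ^ x * 13 ^ m -
          (2 * (9 / 10 : ℝ) ^ x - (2 / 5 : ℝ) ^ x) * 10 ^ m)
      (Set.Icc (0 : ℝ) (m : ℝ)) ∧
    ∀ m₁ m₁' : ℕ, m₁ ≤ m → m₁' ≤ m → m₁ ≠ m₁' →
      (2 ^ (4 * m + 1) - 3 ^ (2 * m₁) * 13 ^ (m - m₁) -
          (2 * 3 ^ (2 * m₁) - 2 ^ (2 * m₁)) * 10 ^ (m - m₁) : ℤ) ≠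
        2 ^ (4 * m + 1) - 3 ^ (2 * m₁') * 13 ^ (m - m₁') -
          (2 * 3 ^ (2 * m₁') - 2 ^ (2 * m₁')) * 10 ^ (m - m₁') := by
  have hmono := auxmono m hm
  refine ⟨hmono, ?_⟩
  intro m₁ m₁' h1 h2 hne heq
  have hmem : ∀ k : ℕ, k ≤ m → (k:ℝ) ∈ Set.Icc (0:ℝ) (m:ℝ) :=
    fun k hk => ⟨Nat.cast_nonneg k, by exact_mod_cast hk⟩
  have hreal : ((2 ^ (4 * m + 1) - 3 ^ (2 * m₁) * 13 ^ (m - m₁) -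
      (2 * 3 ^ (2 * m₁) - 2 ^ (2 * m₁)) * 10 ^ (m - m₁) : ℤ) : ℝ) =
      ((2 ^ (4 * m + 1) - 3 ^ (2 * m₁') * 13 ^ (m - m₁') -
      (2 * 3 ^ (2 * m₁') - 2 ^ (2 * m₁')) * 10 ^ (m - m₁') : ℤ) : ℝ) := by
    exact_mod_cast heq
  rw [auxcast m m₁ h1, auxcast m m₁' h2] at hreal
  rcases hne.lt_or_gt with h | h
  · exact absurd hreal (ne_of_lt (hmono (hmem _ h1) (hmem _ h2) (by exact_mod_cast h)))
  · exact absurd hreal.symm (ne_of_lt (hmono (hmem _ h2) (hmem _ h1) (by exact_mod_cast h)))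
end
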